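/- Let N ∈ ℕ and Δx > 0. Index vectors by i ∈ ℤ/Nℤ (periodic boundary conditions) and let D ∈ ℝ^{N×N} be the centered finite-difference matrix (Dφ)_i = (φ_{i+1} − φ_{i−1})/(2Δx). Define H̃ : ℝ^N × ℝ^N → ℝ by H̃(χ, φ) = (1/2) Σ_i [ (1 + χ_i) ((Dφ)_i)² + χ_i² ]. Then the canonical Hamiltonian system (χ', φ') = J_{2N} ∇H̃(χ, φ) (with (χ,φ) playing the role of (q,p)) is exactly the semi-discretized shallow water system: χ' = −D(Dφ) − D(χ ⊙ Dφ) and φ' = −(1/2) (Dφ) ⊙ (Dφ) − χ, where ⊙ denotes the componentwise product of vectors. -/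

import Mathlib

noncomputable section

/-- The centered finite-difference operator `(Dφ)ᵢ = (φ_{i+1} − φ_{i−1})/(2Δx)` with
periodic indexing `i ∈ ℤ/Nℤ`. -/
def centeredDiff (N : ℕ) (Δx : ℝ) (φ : ZMod N → ℝ) : ZMod N → ℝ :=
  fun i => (φ (i + 1) - φ (i - 1)) / (2 * Δx)

open InnerProductSpace

namespace SWHelpers

variable {N : ℕ} [NeZero N]

lemma hasDerivAt_euclidean (f : ℝ → EuclideanSpace ℝ (ZMod N)) (v : EuclideanSpace ℝ (ZMod N))
    (t : ℝ) : HasDerivAt f v t ↔ ∀ i, HasDerivAt (fun s => f s i) (v i) t := by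
  set e := EuclideanSpace.equiv (ZMod N) ℝ
  constructor
  · intro h i
    exact ((EuclideanSpace.proj i).hasFDerivAt.comp_hasDerivAt t h)
  · intro h
    have h1 : HasDerivAt (fun s => e (f s)) (e v) t := hasDerivAt_pi.2 h
    have h2 := (e.symm.toContinuousLinearMap.hasFDerivAt.comp_hasDerivAt t h1)
    simpa [e, Function.comp_def] using h2

lemma hasGradientAt_p (Δx : ℝ) (χ φ : EuclideanSpace ℝ (ZMod N)) :
    HasGradientAt (fun p : EuclideanSpace ℝ (ZMod N) =>
      (1 / 2) * ∑ i : ZMod N, ((1 + χ i) * (centeredDiff N Δx (fun j => p j) i) ^ 2 + (χ i) ^ 2))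
      (show EuclideanSpace ℝ (ZMod N) from WithLp.toLp 2 fun i =>
        ((1 + χ (i-1)) * centeredDiff N Δx (fun j => φ j) (i-1)
          - (1 + χ (i+1)) * centeredDiff N Δx (fun j => φ j) (i+1)) / (2*Δx)) φ := by
  set g : EuclideanSpace ℝ (ZMod N) := WithLp.toLp 2 fun i =>
        ((1 + χ (i-1)) * centeredDiff N Δx (fun j => φ j) (i-1)
          - (1 + χ (i+1)) * centeredDiff N Δx (fun j => φ j) (i+1)) / (2*Δx) with hg
  rw [hasGradientAt_iff_hasFDerivAt]
  set L : ZMod N → (EuclideanSpace ℝ (ZMod N) →L[ℝ] ℝ) := fun i =>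
    (2*Δx)⁻¹ • (EuclideanSpace.proj (i+1) - EuclideanSpace.proj (i-1)) with hL
  have hLapp : ∀ (i : ZMod N) (p : EuclideanSpace ℝ (ZMod N)),
      L i p = centeredDiff N Δx (fun j => p j) i := by
    intro i p
    simp [hL, centeredDiff, div_eq_inv_mul, mul_sub]
  have hterm : ∀ i : ZMod N, HasFDerivAt
      (fun p : EuclideanSpace ℝ (ZMod N) =>
        (1 + χ i) * (centeredDiff N Δx (fun j => p j) i) ^ 2 + (χ i) ^ 2)
      (((1 + χ i) * (2 * centeredDiff N Δx (fun j => φ j) i)) • L i) φ := by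
    intro i
    have h1 : HasFDerivAt (fun p : EuclideanSpace ℝ (ZMod N) =>
        centeredDiff N Δx (fun j => p j) i) (L i) φ := by
      have := (L i).hasFDerivAt (x := φ)
      exact this.congr_of_eventuallyEq (Filter.Eventually.of_forall fun p => (hLapp i p).symm)
    have h2 := ((h1.mul h1).const_mul (1 + χ i)).add_const ((χ i) ^ 2)
    have hfun : (fun p : EuclideanSpace ℝ (ZMod N) =>
        (1 + χ i) * (centeredDiff N Δx (fun j => p j) i) ^ 2 + (χ i) ^ 2)
        = fun p : EuclideanSpace ℝ (ZMod N) =>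
          (1 + χ i) * (centeredDiff N Δx (fun j => p j) i * centeredDiff N Δx (fun j => p j) i)
            + (χ i) ^ 2 := by
      funext p; ring
    have hder : ((1 + χ i) * (2 * centeredDiff N Δx (fun j => φ j) i)) • L i
        = (1 + χ i) • (centeredDiff N Δx (fun j => φ j) i • L i
            + centeredDiff N Δx (fun j => φ j) i • L i) := by
      ext w
      simp only [ContinuousLinearMap.smul_apply, ContinuousLinearMap.add_apply, smul_eq_mul]
      ring
    rw [hfun, hder]; exact h2
  have hsum := (HasFDerivAt.sum (fun i (_ : i ∈ Finset.univ) => hterm i)).const_mul (1/2)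
  refine (hsum.congr_of_eventuallyEq (Filter.Eventually.of_forall fun p => by simp only [Finset.sum_apply])).congr_fderiv (Eq.symm ?_)
  ext v
  simp only [ContinuousLinearMap.smul_apply, ContinuousLinearMap.coe_sum', Finset.sum_apply,
    toDual_apply_apply, smul_eq_mul]
  have hinner : (inner ℝ g v : ℝ) = ∑ i : ZMod N, g i * v i := by
    simp [PiLp.inner_apply, RCLike.inner_apply, conj_trivial, mul_comm]
  rw [hinner]
  have hLv : ∀ i : ZMod N, L i v = (2*Δx)⁻¹ * (v (i+1) - v (i-1)) := by
    intro i; simp [hL, mul_sub]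
  simp only [ContinuousLinearMap.smul_apply, smul_eq_mul, hLv]
  set a : ZMod N → ℝ := fun i => (1 + χ i) * centeredDiff N Δx (fun j => φ j) i with ha
  have key : ∑ i : ZMod N, g i * v i
      = ∑ i : ZMod N, (2*Δx)⁻¹ * (a (i-1) * v i) - ∑ i : ZMod N, (2*Δx)⁻¹ * (a (i+1) * v i) := by
    rw [← Finset.sum_sub_distrib]
    apply Finset.sum_congr rfl
    intro i _
    simp only [hg, ha, PiLp.toLp_apply]
    ring
  have e1 : ∑ i : ZMod N, (2*Δx)⁻¹ * (a (i-1) * v i)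
      = ∑ i : ZMod N, (2*Δx)⁻¹ * (a i * v (i+1)) := by
    apply Fintype.sum_equiv (Equiv.subRight (1 : ZMod N)) _ _
    intro i
    have h : i - 1 + 1 = i := by ring
    rw [Equiv.subRight_apply, h]
  have e2 : ∑ i : ZMod N, (2*Δx)⁻¹ * (a (i+1) * v i)
      = ∑ i : ZMod N, (2*Δx)⁻¹ * (a i * v (i-1)) := by
    apply Fintype.sum_equiv (Equiv.addRight (1 : ZMod N)) _ _
    intro i
    have h : i + 1 - 1 = i := by ring
    rw [Equiv.coe_addRight, h]
  rw [key, e1, e2, ← Finset.sum_sub_distrib, Finset.mul_sum]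
  apply Finset.sum_congr rfl
  intro i _
  simp only [ha]
  ring

lemma hasGradientAt_q (Δx : ℝ) (χ φ : EuclideanSpace ℝ (ZMod N)) :
    HasGradientAt (fun q : EuclideanSpace ℝ (ZMod N) =>
      (1 / 2) * ∑ i : ZMod N, ((1 + q i) * (centeredDiff N Δx (fun j => φ j) i) ^ 2 + (q i) ^ 2))
      (show EuclideanSpace ℝ (ZMod N) from WithLp.toLp 2 fun i =>
        (1/2) * (centeredDiff N Δx (fun j => φ j) i) ^ 2 + χ i) χ := by
  set g : EuclideanSpace ℝ (ZMod N) := WithLp.toLp 2 fun i =>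
        (1/2) * (centeredDiff N Δx (fun j => φ j) i) ^ 2 + χ i with hg
  rw [hasGradientAt_iff_hasFDerivAt]
  set c : ZMod N → ℝ := fun i => (centeredDiff N Δx (fun j => φ j) i) ^ 2 with hc
  have hterm : ∀ i : ZMod N, HasFDerivAt
      (fun q : EuclideanSpace ℝ (ZMod N) => (1 + q i) * c i + (q i) ^ 2)
      ((c i + 2 * χ i) • ((EuclideanSpace.proj i : EuclideanSpace ℝ (ZMod N) →L[ℝ] ℝ))) χ := by
    intro i
    have h1 : HasFDerivAt (fun q : EuclideanSpace ℝ (ZMod N) => q i)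
        ((EuclideanSpace.proj i : EuclideanSpace ℝ (ZMod N) →L[ℝ] ℝ)) χ :=
      (EuclideanSpace.proj i : EuclideanSpace ℝ (ZMod N) →L[ℝ] ℝ).hasFDerivAt.congr_of_eventuallyEq
        (Filter.Eventually.of_forall fun q => rfl)
    have h2 := ((h1.const_add 1).mul_const (c i)).add (h1.mul h1)
    have hfun : (fun q : EuclideanSpace ℝ (ZMod N) => (1 + q i) * c i + (q i) ^ 2)
        = fun q : EuclideanSpace ℝ (ZMod N) => (1 + q i) * c i + q i * q i := by
      funext q; ring
    have hder : (c i + 2 * χ i) • ((EuclideanSpace.proj i : EuclideanSpace ℝ (ZMod N) →L[ℝ] ℝ))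
        = c i • EuclideanSpace.proj i
          + (χ i • EuclideanSpace.proj i + χ i • EuclideanSpace.proj i) := by
      ext w
      simp only [ContinuousLinearMap.smul_apply, ContinuousLinearMap.add_apply, smul_eq_mul]
      ring
    rw [hfun, hder]; exact h2
  have hsum := (HasFDerivAt.sum (fun i (_ : i ∈ Finset.univ) => hterm i)).const_mul (1/2)
  refine (hsum.congr_of_eventuallyEq (Filter.Eventually.of_forall fun p => by simp only [Finset.sum_apply, hc])).congr_fderiv (Eq.symm ?_)
  ext v
  simp only [ContinuousLinearMap.smul_apply, ContinuousLinearMap.coe_sum', Finset.sum_apply,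
    toDual_apply_apply, smul_eq_mul]
  have hinner : (inner ℝ g v : ℝ) = ∑ i : ZMod N, g i * v i := by
    simp [PiLp.inner_apply, RCLike.inner_apply, conj_trivial, mul_comm]
  rw [hinner, Finset.mul_sum]
  apply Finset.sum_congr rfl
  intro i _
  simp only [hg, hc, PiLp.toLp_apply, ContinuousLinearMap.smul_apply, smul_eq_mul, PiLp.proj_apply]
  ring

end SWHelpers

/-- The semi-discretized shallow water system is the canonical Hamiltonian system for
`H̃(χ, φ) = (1/2) Σᵢ [(1 + χᵢ)((Dφ)ᵢ)² + χᵢ²]` with `(χ, φ)` playing the role of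
`(q, p)`: a pair of trajectories solves `(χ', φ') = J_{2N} ∇H̃(χ, φ)` (i.e.
`χ' = ∇_φ H̃`, `φ' = −∇_χ H̃`) if and only if
`χ' = −D(Dφ) − D(χ ⊙ Dφ)` and `φ' = −(1/2)(Dφ) ⊙ (Dφ) − χ` componentwise. -/
theorem semidiscrete_shallow_water_hamiltonian
    (N : ℕ) [NeZero N] (Δx : ℝ) (hΔx : 0 < Δx)
    (Ham : EuclideanSpace ℝ (ZMod N) → EuclideanSpace ℝ (ZMod N) → ℝ)
    (hHam : ∀ χ φ, Ham χ φ =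
      (1 / 2) * ∑ i : ZMod N,
        ((1 + χ i) * (centeredDiff N Δx (fun j => φ j) i) ^ 2 + (χ i) ^ 2))
    (χ φ : ℝ → EuclideanSpace ℝ (ZMod N)) (t : ℝ) :
    (HasDerivAt χ (gradient (fun p => Ham (χ t) p) (φ t)) t ∧
      HasDerivAt φ (-gradient (fun q => Ham q (φ t)) (χ t)) t)
    ↔
    (∀ i : ZMod N,
      HasDerivAt (fun s => χ s i)
        (-(centeredDiff N Δx (centeredDiff N Δx (fun j => φ t j)) i)
          - centeredDiff N Δx (fun j => χ t j * centeredDiff N Δx (fun k => φ t k) j) i) t ∧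
      HasDerivAt (fun s => φ s i)
        (-(1 / 2) * (centeredDiff N Δx (fun j => φ t j) i) ^ 2 - χ t i) t) := by
  set gP : EuclideanSpace ℝ (ZMod N) := WithLp.toLp 2 fun i =>
        ((1 + χ t (i-1)) * centeredDiff N Δx (fun j => φ t j) (i-1)
          - (1 + χ t (i+1)) * centeredDiff N Δx (fun j => φ t j) (i+1)) / (2*Δx) with hgP
  set gQ : EuclideanSpace ℝ (ZMod N) := WithLp.toLp 2 fun i =>
        (1/2) * (centeredDiff N Δx (fun j => φ t j) i) ^ 2 + χ t i with hgQ
  have hp : gradient (fun p => Ham (χ t) p) (φ t) = gP := by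
    have heq : (fun p => Ham (χ t) p) = fun p : EuclideanSpace ℝ (ZMod N) =>
        (1 / 2) * ∑ i : ZMod N,
          ((1 + χ t i) * (centeredDiff N Δx (fun j => p j) i) ^ 2 + (χ t i) ^ 2) :=
      funext fun p => hHam (χ t) p
    rw [heq]
    exact (SWHelpers.hasGradientAt_p Δx (χ t) (φ t)).gradient
  have hq : gradient (fun q => Ham q (φ t)) (χ t) = gQ := by
    have heq : (fun q => Ham q (φ t)) = fun q : EuclideanSpace ℝ (ZMod N) =>
        (1 / 2) * ∑ i : ZMod N,
          ((1 + q i) * (centeredDiff N Δx (fun j => φ t j) i) ^ 2 + (q i) ^ 2) :=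
      funext fun q => hHam q (φ t)
    rw [heq]
    exact (SWHelpers.hasGradientAt_q Δx (χ t) (φ t)).gradient
  rw [hp, hq, SWHelpers.hasDerivAt_euclidean, SWHelpers.hasDerivAt_euclidean, forall_and]
  have hA : ∀ i : ZMod N, gP i
      = -(centeredDiff N Δx (centeredDiff N Δx (fun j => φ t j)) i)
          - centeredDiff N Δx (fun j => χ t j * centeredDiff N Δx (fun k => φ t k) j) i := by
    intro i
    show ((1 + χ t (i-1)) * centeredDiff N Δx (fun j => φ t j) (i-1)
          - (1 + χ t (i+1)) * centeredDiff N Δx (fun j => φ t j) (i+1)) / (2*Δx) = _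
    simp only [centeredDiff]
    ring
  have hB : ∀ i : ZMod N, (-gQ) i
      = -(1 / 2) * (centeredDiff N Δx (fun j => φ t j) i) ^ 2 - χ t i := by
    intro i
    show -((1/2) * (centeredDiff N Δx (fun j => φ t j) i) ^ 2 + χ t i) = _
    ring
  exact and_congr (forall_congr' fun i => by rw [hA i]) (forall_congr' fun i => by rw [hB i])
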